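/- arXiv:2505.10629 — 4 statements merged into one kernel-verified Lean document; each statement's English description precedes it below -/
import Mathlib

section
/- With T, S, R₁ = T, R₂ = STS^{-1} as above (c = 1/(q+q^{-1}), s² = (q²+1+q^{-2})/(q+q^{-1})², c²+s²=1), the product R₂ R₁² R₂ equals the diagonal matrix diag(q^{-2}, q^{2}). -/
open Matrix

/-- In the `[21]` representation of `B₃`, the Jucys–Murphy twist
`Ẽ₃ = σ₂σ₁²σ₂` is represented by `R₂R₁²R₂ = diag(q⁻², q²)`. -/
theorem jucys_murphy_E3_diag {K : Type*} [Field K] (q s : K)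
    (hq : q ≠ 0) (hq2 : q + q⁻¹ ≠ 0)
    (hs : s ^ 2 = (q ^ 2 + 1 + (q⁻¹) ^ 2) / (q + q⁻¹) ^ 2)
    (c : K) (hc : c = (q + q⁻¹)⁻¹)
    (T S R₁ R₂ : Matrix (Fin 2) (Fin 2) K)
    (hT : T = !![q, 0; 0, -q⁻¹])
    (hS : S = !![c, s; s, -c])
    (hR₁ : R₁ = T) (hR₂ : R₂ = S * T * S⁻¹) :
    R₂ * R₁ ^ 2 * R₂ = !![(q⁻¹) ^ 2, 0; 0, q ^ 2] := by
  have hqw : q * q⁻¹ = 1 := mul_inv_cancel₀ hq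
  have hc1 : c * (q + q⁻¹) = 1 := by rw [hc]; exact inv_mul_cancel₀ hq2
  have hq21 : q * q + 1 ≠ 0 := by
    have h : q * q + 1 = (q + q⁻¹) * q := by linear_combination (-1 : K) * hqw
    rw [h]; exact mul_ne_zero hq2 hq
  have hs2 : s ^ 2 * (q + q⁻¹) ^ 2 = q ^ 2 + 1 + (q⁻¹) ^ 2 := by
    rw [hs]; field_simp; rw [mul_div_cancel_left₀ _ (by rw [pow_two]; exact hq21)]
  have hc2 : c ^ 2 * (q + q⁻¹) ^ 2 = 1 := by
    rw [hc]; field_simp; exact div_self (by rw [pow_two]; exact hq21)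
  have hs1 : s ^ 2 = 1 - c ^ 2 := by
    have h : (s ^ 2 - (1 - c ^ 2)) * (q + q⁻¹) ^ 2 = 0 := by
      linear_combination hs2 + hc2 - 2 * hqw
    rcases mul_eq_zero.mp h with h' | h'
    · exact sub_eq_zero.mp h'
    · exact absurd h' (pow_ne_zero 2 hq2)
  have hSS : S * S = 1 := by
    subst hS
    ext i j
    fin_cases i <;> fin_cases j <;>
      simp [Matrix.mul_apply, Fin.sum_univ_two]
    · linear_combination hs1
    · ring
    · ring
    · linear_combination hs1
  have hSinv : S⁻¹ = S := Matrix.inv_eq_left_inv hSS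
  have hR2 : S * T * S = !![-(c * (q⁻¹) ^ 2), s; s, c * q ^ 2] := by
    subst hS hT
    ext i j
    fin_cases i <;> fin_cases j <;>
      simp [Matrix.mul_apply, Fin.sum_univ_two]
    · linear_combination (-q⁻¹) * hs1 + (c + q⁻¹) * hc1 + (-c) * hqw
    · linear_combination s * hc1
    · linear_combination s * hc1
    · linear_combination q * hs1 + (-(c + q)) * hc1 + c * hqw
  subst hR₁ hR₂
  rw [hSinv, hR2]
  subst hT
  ext i j
  fin_cases i <;> fin_cases j <;>
    simp [Matrix.mul_apply, Fin.sum_univ_two, pow_two]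
  · linear_combination (q⁻¹ ^ 2 * c ^ 2 * (q * q⁻¹ + 1)) * hqw + q⁻¹ ^ 2 * hs1
  · ring
  · ring
  · linear_combination (q ^ 2 * c ^ 2 * (q * q⁻¹ + 1)) * hqw + q ^ 2 * hs1
end

section
/- Let h(q) = q^w for some integer w (even), g(q) a Laurent polynomial, and define the 3-strand HZ numerator N(λ) = 1 + λ g(q) q^{-2w}(q+q^{-1}) + (−1)^w q^{-4w} λ². If g(q) = −(q^{δ+1}+q^{-δ-1})/(q+q^{-1}) for some even integer δ, then N(λ) = (1 − λ q^{-2w+δ+1})(1 − λ q^{-2w−δ−1}). -/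
/-- 3-strand HZ factorisability criterion: if
`g(q) = −(q^{δ+1}+q^{−δ−1})/(q+q⁻¹)` with `δ, w` even integers, then the
3-strand HZ numerator
`N(λ) = 1 + λ g(q) q^{−2w}(q+q⁻¹) + (−1)^w q^{−4w} λ²` factorizes as
`(1 − λ q^{−2w+δ+1})(1 − λ q^{−2w−δ−1})`. -/
theorem hz3_numerator_factorization {K : Type*} [Field K] (q lam : K)
    (hq : q ≠ 0) (hq2 : q + q⁻¹ ≠ 0)
    (w δ : ℤ) (hw : Even w) (hδ : Even δ)
    (g : K) (hg : g = -(q ^ (δ + 1) + q ^ (-δ - 1)) / (q + q⁻¹)) :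
    1 + lam * g * q ^ (-2 * w) * (q + q⁻¹) + (-1 : K) ^ w * q ^ (-4 * w) * lam ^ 2
      = (1 - lam * q ^ (-2 * w + δ + 1)) * (1 - lam * q ^ (-2 * w - δ - 1)) := by
  subst hg
  rw [hw.neg_one_zpow]
  have e1 : q ^ (-2*w + δ + 1) * q ^ (-2*w - δ - 1) = q ^ (-4*w) := by
    rw [← zpow_add₀ hq]; ring_nf
  have e2 : q ^ (δ+1) * q ^ (-2*w) = q ^ (-2*w + δ + 1) := by
    rw [← zpow_add₀ hq]; ring_nf
  have e3 : q ^ (-δ-1) * q ^ (-2*w) = q ^ (-2*w - δ - 1) := by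
    rw [← zpow_add₀ hq]; ring_nf
  have key : lam * (-(q ^ (δ + 1) + q ^ (-δ - 1)) / (q + q⁻¹)) * q ^ (-2 * w) * (q + q⁻¹)
      = -(lam * (q ^ (δ + 1) * q ^ (-2*w)) + lam * (q ^ (-δ - 1) * q ^ (-2*w))) := by
    have h := div_mul_cancel₀ (-(q ^ (δ + 1) + q ^ (-δ - 1))) hq2
    linear_combination (lam * q ^ (-2*w)) * h
  rw [key, e2, e3, ← e1]
  ring
end

section
/- Let R₁ = diag(q, −1/q) and R₂ = [[−c/q², −s],[−s, q²c]] with c = 1/(q+q^{-1}), s = √(q²+1+q^{-2})/(q+q^{-1}) (c²+s²=1), and R₃ = R₁. Then (R₃R₂R₁)⁴ = I₂ and (R₂R₁)³ = I₂. -/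
open Matrix

/-- In the `[22]` representation of `B₄`, the full twist `F₄ = (σ₃σ₂σ₁)⁴`
and the partial full twist `F₃ = (σ₂σ₁)³` both act trivially:
`(R₃R₂R₁)⁴ = I₂` and `(R₂R₁)³ = I₂`. -/
theorem full_twists_22 {K : Type*} [Field K] (q s : K)
    (hq : q ≠ 0) (hq2 : q + q⁻¹ ≠ 0)
    (hs : s ^ 2 = (q ^ 2 + 1 + (q⁻¹) ^ 2) / (q + q⁻¹) ^ 2)
    (c : K) (hc : c = (q + q⁻¹)⁻¹)
    (R₁ R₂ R₃ : Matrix (Fin 2) (Fin 2) K)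
    (hR₁ : R₁ = !![q, 0; 0, -q⁻¹])
    (hR₂ : R₂ = !![-c * (q⁻¹) ^ 2, -s; -s, q ^ 2 * c])
    (hR₃ : R₃ = R₁) :
    (R₃ * R₂ * R₁) ^ 4 = 1 ∧ (R₂ * R₁) ^ 3 = 1 := by
  have hq21 : q ^ 2 + 1 ≠ 0 := by
    have : q ^ 2 + 1 = q * (q + q⁻¹) := by field_simp
    rw [this]; exact mul_ne_zero hq hq2
  have hcs : c ^ 2 + s ^ 2 = 1 := by
    rw [hs, hc, show q ^ 2 + 1 + (q⁻¹) ^ 2 = (q + q⁻¹) ^ 2 - 1 from by field_simp; ring]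
    generalize hu : q + q⁻¹ = u at hq2 ⊢
    field_simp
    try ring
  have hcq : c * (q ^ 2 + 1) = q := by
    rw [hc]
    have : q + q⁻¹ = (q ^ 2 + 1) / q := by field_simp
    rw [this]
    field_simp
  have hA : R₃ * R₂ * R₁ = !![-c, s; s, c] := by
    subst hR₃ hR₁ hR₂
    ext i j
    fin_cases i <;> fin_cases j <;>
      · simp [Matrix.mul_apply, Fin.sum_univ_succ]
        try field_simp
        try ring
  have hB : R₂ * R₁ = !![-c * q⁻¹, s * q⁻¹; -s * q, -q * c] := by
    subst hR₁ hR₂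
    ext i j
    fin_cases i <;> fin_cases j <;>
      · simp [Matrix.mul_apply, Fin.sum_univ_succ]
        try field_simp
        try ring
  constructor
  · have hA2 : (R₃ * R₂ * R₁) ^ 2 = 1 := by
      rw [hA]
      ext i j
      fin_cases i <;> fin_cases j <;>
        · simp [pow_two, Matrix.mul_apply, Fin.sum_univ_succ, Matrix.one_apply]
          first
          | linear_combination hcs
          | ring
    calc (R₃ * R₂ * R₁) ^ 4 = ((R₃ * R₂ * R₁) ^ 2) ^ 2 := by rw [← pow_mul]
      _ = 1 := by rw [hA2, one_pow]
  · have h2 : (R₂ * R₁) ^ 2 = -(R₂ * R₁) - 1 := by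
      rw [hB]
      ext i j
      fin_cases i <;> fin_cases j
      · simp [pow_two, Matrix.mul_apply, Fin.sum_univ_succ, Matrix.one_apply]
        field_simp
        linear_combination (1 - q ^ 2) * c * hcq - (1 - q ^ 2) * q ^ 2 * hcs + (-q ^ 4) * hcs + c * q ^ 2 * hcq
      · simp [pow_two, Matrix.mul_apply, Fin.sum_univ_succ, Matrix.one_apply]
        field_simp
        linear_combination s * (q ^ 2 - 1) * hcq + (-s * q ^ 2) * hcq
      · simp [pow_two, Matrix.mul_apply, Fin.sum_univ_succ, Matrix.one_apply]
        field_simp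
        linear_combination s * (1 - q) * hcq + (s * q) * hcq
      · simp [pow_two, Matrix.mul_apply, Fin.sum_univ_succ, Matrix.one_apply]
        field_simp
        linear_combination (1 - q) * c * hcq - (1 - q) * hcs + (-q) * hcs + c * q * hcq
    calc (R₂ * R₁) ^ 3 = (R₂ * R₁) ^ 2 * (R₂ * R₁) := by rw [pow_succ]
      _ = (-(R₂ * R₁) - 1) * (R₂ * R₁) := by rw [h2]
      _ = -((R₂ * R₁) ^ 2) - (R₂ * R₁) := by rw [pow_two]; noncomm_ring
      _ = -(-(R₂ * R₁) - 1) - (R₂ * R₁) := by rw [h2]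
      _ = 1 := by noncomm_ring
end

section
/- In the [22]-representation of B₄ as above, R₃R₂R₁²R₂R₃ = I₂ (the Jucys–Murphy twist Ẽ₄ = σ₃σ₂σ₁²σ₂σ₃ acts trivially). -/
open Matrix

/-- In the `[22]` representation of `B₄`, the Jucys–Murphy twist
`Ẽ₄ = σ₃σ₂σ₁²σ₂σ₃` acts trivially: `R₃R₂R₁²R₂R₃ = I₂`. -/
theorem jucys_murphy_E4_22 {K : Type*} [Field K] (q s : K)
    (hq : q ≠ 0) (hq2 : q + q⁻¹ ≠ 0)
    (hs : s ^ 2 = (q ^ 2 + 1 + (q⁻¹) ^ 2) / (q + q⁻¹) ^ 2)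
    (c : K) (hc : c = (q + q⁻¹)⁻¹)
    (R₁ R₂ R₃ : Matrix (Fin 2) (Fin 2) K)
    (hR₁ : R₁ = !![q, 0; 0, -q⁻¹])
    (hR₂ : R₂ = !![-c * (q⁻¹) ^ 2, -s; -s, q ^ 2 * c])
    (hR₃ : R₃ = R₁) :
    R₃ * R₂ * R₁ ^ 2 * R₂ * R₃ = 1 := by
  have h0 : 1 + q ^ 2 ≠ 0 := by
    intro h
    apply hq2
    field_simp
    linear_combination h
  have hcs : c ^ 2 + s ^ 2 = 1 := by
    rw [hs, hc]
    have h2 : q + q⁻¹ = (1 + q ^ 2) / q := by field_simp; ring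
    rw [h2]
    field_simp
    ring
  have hA : R₁ * R₂ * R₁ = !![-c, s; s, c] := by
    subst hR₁ hR₂
    ext i j
    fin_cases i <;> fin_cases j <;>
      simp [Matrix.mul_apply, Fin.sum_univ_succ] <;> field_simp <;> ring
  have hsplit : R₃ * R₂ * R₁ ^ 2 * R₂ * R₃ = (R₁ * R₂ * R₁) * (R₁ * R₂ * R₁) := by
    rw [hR₃, pow_two]
    noncomm_ring
  rw [hsplit, hA]
  ext i j
  fin_cases i <;> fin_cases j <;>
    simp [Matrix.mul_apply, Fin.sum_univ_succ, Matrix.one_apply]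
  all_goals (first | ring1 | linear_combination hcs)
end
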